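/- Let G be an acyclically edge k-critical graph with k ≥ Δ(G)+2 and let v be a vertex of degree 3 in G. Then every neighbor of v has degree at least k − Δ(G) + 2. -/

import Mathlib

open SimpleGraph Finset

universe u

variable {V : Type u}

/-- A proper edge coloring with `k` colors: distinct edges sharing a vertex get
different colors. -/
def ProperEC (G : SimpleGraph V) {k : ℕ} (φ : Sym2 V → Fin k) : Prop :=
  ∀ e₁ ∈ G.edgeSet, ∀ e₂ ∈ G.edgeSet, e₁ ≠ e₂ → (∃ x, x ∈ e₁ ∧ x ∈ e₂) → φ e₁ ≠ φ e₂

/-- An acyclic edge coloring: proper, and no cycle of `G` uses only two colors. -/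
def AcyclicEC (G : SimpleGraph V) {k : ℕ} (φ : Sym2 V → Fin k) : Prop :=
  ProperEC G φ ∧
    ∀ (v : V) (w : G.Walk v v), w.IsCycle → 2 < (w.edges.map φ).toFinset.card

/-- `G` has an acyclic edge coloring with `k` colors, i.e. `χ'_a(G) ≤ k`. -/
def HasAEC (G : SimpleGraph V) (k : ℕ) : Prop :=
  ∃ φ : Sym2 V → Fin k, AcyclicEC G φ

/-- `G` is acyclically edge `k`-critical: `χ'_a(G) > k` but every proper subgraph
admits an acyclic edge `k`-coloring. -/
def AcyclicallyEdgeCritical (G : SimpleGraph V) (k : ℕ) : Prop :=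
  ¬ HasAEC G k ∧ ∀ H : SimpleGraph V, H ≤ G → H ≠ G → HasAEC H k

/-- `C_φ(v)`: the set of colors appearing on edges incident with `v`. -/
def Cset (G : SimpleGraph V) {k : ℕ} (φ : Sym2 V → Fin k) (v : V) : Set (Fin k) :=
  {c | ∃ u, G.Adj v u ∧ φ s(v, u) = c}

/-! ### Auxiliary machinery -/

section Machinery

lemma walk_endpoint_split {G₀ : SimpleGraph V} {q : V} :
    ∀ {s t : V} (P : G₀.Walk s t), P.support.Nodup → s(t, q) ∈ P.edges →
      ∃ W : G₀.Walk s q, s(t, q) ∉ W.edges ∧ ∀ f ∈ W.edges, f ∈ P.edges := by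
  intro s t P
  induction P with
  | nil => simp
  | @cons s m t h P' ih =>
    intro hnd he
    rw [SimpleGraph.Walk.support_cons, List.nodup_cons] at hnd
    by_cases heq : s(t, q) = s(s, m)
    · rw [Sym2.eq_iff] at heq
      rcases heq with ⟨hp, hq⟩ | ⟨hp, hq⟩
      · exfalso; subst hp; exact hnd.1 (P'.end_mem_support)
      · subst hq; subst hp
        exact ⟨Walk.nil, by simp, by simp⟩
    · rw [SimpleGraph.Walk.edges_cons, List.mem_cons] at he
      rcases he with he | he
      · exact absurd he heq
      · obtain ⟨W₁, hW1, hW2⟩ := ih hnd.2 he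
        refine ⟨Walk.cons h W₁, ?_, ?_⟩
        · rw [SimpleGraph.Walk.edges_cons, List.mem_cons]
          rintro (hc | hc); exact heq hc; exact hW1 hc
        · intro f hf
          rw [SimpleGraph.Walk.edges_cons, List.mem_cons] at hf ⊢
          rcases hf with hf | hf
          · exact Or.inl hf
          · exact Or.inr (hW2 f hf)

lemma cycle_edge_split_aux {G₀ : SimpleGraph V} {p q : V} (w : G₀.Walk p p)
    (hc : w.IsCycle) (he : s(p, q) ∈ w.edges) :
    ∃ W : G₀.Walk p q, s(p, q) ∉ W.edges ∧ ∀ f ∈ W.edges, f ∈ w.edges := by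
  cases w with
  | nil => simp at he
  | @cons _ m _ h rest =>
    have hnd : rest.support.Nodup := by
      have := hc.support_nodup
      rwa [SimpleGraph.Walk.support_cons, List.tail_cons] at this
    have hednd : (Walk.cons h rest).edges.Nodup := hc.isTrail.edges_nodup
    rw [SimpleGraph.Walk.edges_cons, List.nodup_cons] at hednd
    by_cases heq : s(p, q) = s(p, m)
    · have hqm : q = m := by
        rw [Sym2.eq_iff] at heq
        rcases heq with ⟨_, hq⟩ | ⟨hp, _⟩
        · exact hq
        · exact absurd hp h.ne
      subst hqm
      refine ⟨rest.reverse, ?_, ?_⟩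
      · rw [SimpleGraph.Walk.edges_reverse, List.mem_reverse]
        intro hcon
        exact hednd.1 (heq ▸ hcon)
      · intro f hf
        rw [SimpleGraph.Walk.edges_reverse, List.mem_reverse] at hf
        rw [SimpleGraph.Walk.edges_cons]
        exact List.mem_cons_of_mem _ hf
    · have hmem : s(p, q) ∈ rest.edges := by
        rw [SimpleGraph.Walk.edges_cons, List.mem_cons] at he
        tauto
      obtain ⟨W₁, hW1, hW2⟩ := walk_endpoint_split rest hnd hmem
      refine ⟨Walk.cons h W₁, ?_, ?_⟩
      · rw [SimpleGraph.Walk.edges_cons, List.mem_cons]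
        rintro (hcon | hcon); exact heq hcon; exact hW1 hcon
      · intro f hf
        rw [SimpleGraph.Walk.edges_cons, List.mem_cons] at hf
        rw [SimpleGraph.Walk.edges_cons, List.mem_cons]
        rcases hf with hf | hf
        · exact Or.inl hf
        · exact Or.inr (hW2 f hf)

lemma cycle_edge_split [DecidableEq V] {G₀ : SimpleGraph V} {r p q : V} {w : G₀.Walk r r}
    (hc : w.IsCycle) (he : s(p, q) ∈ w.edges) :
    ∃ W : G₀.Walk p q, s(p, q) ∉ W.edges ∧ ∀ f ∈ W.edges, f ∈ w.edges := by
  have hp : p ∈ w.support := w.fst_mem_support_of_mem_edges he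
  have hrot : (w.rotate p hp).edges ~r w.edges := w.rotate_edges p hp
  have he' : s(p, q) ∈ (w.rotate p hp).edges := hrot.mem_iff.mpr he
  obtain ⟨W, h1, h2⟩ := cycle_edge_split_aux (w.rotate p hp) (hc.rotate hp) he'
  exact ⟨W, h1, fun f hf => hrot.mem_iff.mp (h2 f hf)⟩

lemma path_determinism {B : SimpleGraph V}
    (h2 : ∀ z w₁ w₂ w₃, B.Adj z w₁ → B.Adj z w₂ → B.Adj z w₃ → w₁ = w₂ ∨ w₁ = w₃ ∨ w₂ = w₃) :
    ∀ (n : ℕ) {s v' q₁ q₂ : V} (P : B.Walk s q₁) (Q : B.Walk s q₂),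
      P.length ≤ n → P.IsPath → Q.IsPath → B.Adj s v' →
      v' ∉ P.support → v' ∉ Q.support →
      (∀ z₁ z₂, B.Adj q₁ z₁ → B.Adj q₁ z₂ → z₁ = z₂) →
      (∀ z₁ z₂, B.Adj q₂ z₁ → B.Adj q₂ z₂ → z₁ = z₂) → q₁ = q₂ := by
  intro n
  induction n with
  | zero =>
    intro s v' q₁ q₂ P Q hlen hP hQ hadj hv'P hv'Q hq₁ hq₂
    have : P.length = 0 := Nat.le_zero.mp hlen
    have hsq : s = q₁ := (SimpleGraph.Walk.eq_of_length_eq_zero this)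
    subst hsq
    cases Q with
    | nil => rfl
    | @cons _ z₂ _ hz Q' =>
      exfalso
      have : v' = z₂ := hq₁ v' z₂ hadj hz
      subst this
      exact hv'Q (by rw [SimpleGraph.Walk.support_cons]; exact List.mem_cons_of_mem _ Q'.start_mem_support)
  | succ n ih =>
    intro s v' q₁ q₂ P Q hlen hP hQ hadj hv'P hv'Q hq₁ hq₂
    cases P with
    | nil =>
      cases Q with
      | nil => rfl
      | @cons _ z₂ _ hz Q' =>
        exfalso
        have : v' = z₂ := hq₁ v' z₂ hadj hz
        subst this
        exact hv'Q (by rw [SimpleGraph.Walk.support_cons]; exact List.mem_cons_of_mem _ Q'.start_mem_support)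
    | @cons _ z₁ _ hz₁ P' =>
      cases Q with
      | nil =>
        exfalso
        have : v' = z₁ := hq₂ v' z₁ hadj hz₁
        subst this
        exact hv'P (by rw [SimpleGraph.Walk.support_cons]; exact List.mem_cons_of_mem _ P'.start_mem_support)
      | @cons _ z₂ _ hz₂ Q' =>
        have hz12 : z₁ = z₂ := by
          rcases h2 s v' z₁ z₂ hadj hz₁ hz₂ with h | h | h
          · exfalso; subst h
            exact hv'P (by rw [SimpleGraph.Walk.support_cons]; exact List.mem_cons_of_mem _ P'.start_mem_support)
          · exfalso; subst h
            exact hv'Q (by rw [SimpleGraph.Walk.support_cons]; exact List.mem_cons_of_mem _ Q'.start_mem_support)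
          · exact h
        subst hz12
        rw [SimpleGraph.Walk.cons_isPath_iff] at hP hQ
        refine ih P' Q' ?_ hP.1 hQ.1 hz₁.symm hP.2 hQ.2 hq₁ hq₂
        · have : (Walk.cons hz₁ P').length = P'.length + 1 := SimpleGraph.Walk.length_cons _ _
          omega

lemma three_leaves [DecidableEq V] {B : SimpleGraph V}
    (h2 : ∀ z w₁ w₂ w₃, B.Adj z w₁ → B.Adj z w₂ → B.Adj z w₃ → w₁ = w₂ ∨ w₁ = w₃ ∨ w₂ = w₃)
    {p q₁ q₂ : V}
    (hp : ∀ z₁ z₂, B.Adj p z₁ → B.Adj p z₂ → z₁ = z₂)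
    (hq₁ : ∀ z₁ z₂, B.Adj q₁ z₁ → B.Adj q₁ z₂ → z₁ = z₂)
    (hq₂ : ∀ z₁ z₂, B.Adj q₂ z₁ → B.Adj q₂ z₂ → z₁ = z₂)
    (hne₁ : p ≠ q₁) (hne₂ : p ≠ q₂)
    (hr₁ : B.Reachable p q₁) (hr₂ : B.Reachable p q₂) : q₁ = q₂ := by
  obtain ⟨P0⟩ := hr₁
  obtain ⟨Q0⟩ := hr₂
  have hPp : (P0.toPath : B.Walk p q₁).IsPath := P0.toPath.2
  have hQp : (Q0.toPath : B.Walk p q₂).IsPath := Q0.toPath.2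
  set P : B.Walk p q₁ := (P0.toPath : B.Walk p q₁) with hPdef
  set Q : B.Walk p q₂ := (Q0.toPath : B.Walk p q₂) with hQdef
  clear_value P Q
  cases P with
  | nil => exact absurd rfl hne₁
  | @cons _ z₁ _ hz₁ P' =>
    cases Q with
    | nil => exact absurd rfl hne₂
    | @cons _ z₂ _ hz₂ Q' =>
      have hz12 : z₁ = z₂ := hp _ _ hz₁ hz₂
      subst hz12
      rw [SimpleGraph.Walk.cons_isPath_iff] at hPp hQp
      exact path_determinism h2 P'.length P' Q' le_rfl hPp.1 hQp.1 hz₁.symm hPp.2 hQp.2 hq₁ hq₂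

lemma reach_side [DecidableEq V] {B' B : SimpleGraph V} {v z w : V}
    (hsub : ∀ p q, B'.Adj p q → B.Adj p q ∨ s(p, q) = s(v, z))
    (hvdeg : ∀ t, B'.Adj v t → t = z)
    (hne : w ≠ v) (hr : B'.Reachable w v) : B.Reachable z w := by
  obtain ⟨P0⟩ := hr
  have hPp : (P0.toPath : B'.Walk w v).IsPath := P0.toPath.2
  set P : B'.Walk w v := (P0.toPath : B'.Walk w v) with hPdef
  clear_value P
  have hPr : P.reverse.IsPath := hPp.reverse
  cases hrev : P.reverse with
  | nil => exact absurd (by have := congrArg SimpleGraph.Walk.length hrev; simpa using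
      (SimpleGraph.Walk.eq_of_length_eq_zero (by simpa using this.symm ▸ rfl))) (Ne.symm hne)
  | @cons _ t _ ht Q =>
    have htz : t = z := hvdeg t ht
    subst htz
    rw [hrev] at hPr
    rw [SimpleGraph.Walk.cons_isPath_iff] at hPr
    have hvQ : v ∉ Q.support := hPr.2
    have hQB : ∀ f ∈ Q.edges, f ∈ B.edgeSet := by
      intro f hf
      induction f using Sym2.ind with
      | _ c d =>
        have hadj : B'.Adj c d := Q.adj_of_mem_edges hf
        rcases hsub c d hadj with h | h
        · exact h
        · exfalso
          have : v ∈ s(c, d) := by rw [h]; exact Sym2.mem_mk_left _ _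
          rcases Sym2.mem_iff.mp this with hc | hd
          · subst hc; exact hvQ (Q.fst_mem_support_of_mem_edges hf)
          · subst hd; exact hvQ (Q.snd_mem_support_of_mem_edges hf)
    exact ⟨Q.transfer B hQB⟩

/-- The bichromatic subgraph of `H` on colors `c`, `d` under coloring `ψ`. -/
def colGraph (H : SimpleGraph V) {k : ℕ} (ψ : Sym2 V → Fin k) (c d : Fin k) :
    SimpleGraph V where
  Adj p q := H.Adj p q ∧ (ψ s(p, q) = c ∨ ψ s(p, q) = d)
  symm := by
    constructor
    intro p q ⟨h1, h2⟩
    refine ⟨h1.symm, ?_⟩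
    rwa [Sym2.eq_swap] at h2
  loopless := ⟨fun p h => H.loopless.irrefl p h.1⟩

lemma colGraph_adj {H : SimpleGraph V} {k : ℕ} {ψ : Sym2 V → Fin k} {c d : Fin k} {p q : V} :
    (colGraph H ψ c d).Adj p q ↔ H.Adj p q ∧ (ψ s(p, q) = c ∨ ψ s(p, q) = d) := Iff.rfl

lemma color_inj {H : SimpleGraph V} {k : ℕ} {φ : Sym2 V → Fin k} (hp : ProperEC H φ)
    {w z₁ z₂ : V} (h₁ : H.Adj w z₁) (h₂ : H.Adj w z₂)
    (hc : φ s(w, z₁) = φ s(w, z₂)) : z₁ = z₂ := by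
  by_contra hne
  have hedne : s(w, z₁) ≠ s(w, z₂) := by
    intro hcon
    rw [Sym2.eq_iff] at hcon
    rcases hcon with ⟨_, h⟩ | ⟨h1', h2'⟩
    · exact hne h
    · exact h₁.ne h2'.symm
  exact hp s(w, z₁) ((SimpleGraph.mem_edgeSet H).mpr h₁) s(w, z₂)
    ((SimpleGraph.mem_edgeSet H).mpr h₂) hedne
    ⟨w, Sym2.mem_mk_left _ _, Sym2.mem_mk_left _ _⟩ hc

lemma colGraph_deg2 {H : SimpleGraph V} {k : ℕ} {ψ : Sym2 V → Fin k} (hp : ProperEC H ψ)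
    (c d : Fin k) :
    ∀ z w₁ w₂ w₃, (colGraph H ψ c d).Adj z w₁ → (colGraph H ψ c d).Adj z w₂ →
      (colGraph H ψ c d).Adj z w₃ → w₁ = w₂ ∨ w₁ = w₃ ∨ w₂ = w₃ := by
  rintro z w₁ w₂ w₃ ⟨a1, b1⟩ ⟨a2, b2⟩ ⟨a3, b3⟩
  rcases b1 with h1 | h1 <;> rcases b2 with h2 | h2 <;> rcases b3 with h3 | h3
  · exact Or.inl (color_inj hp a1 a2 (h1.trans h2.symm))
  · exact Or.inl (color_inj hp a1 a2 (h1.trans h2.symm))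
  · exact Or.inr (Or.inl (color_inj hp a1 a3 (h1.trans h3.symm)))
  · exact Or.inr (Or.inr (color_inj hp a2 a3 (h2.trans h3.symm)))
  · exact Or.inr (Or.inr (color_inj hp a2 a3 (h2.trans h3.symm)))
  · exact Or.inr (Or.inl (color_inj hp a1 a3 (h1.trans h3.symm)))
  · exact Or.inl (color_inj hp a1 a2 (h1.trans h2.symm))
  · exact Or.inl (color_inj hp a1 a2 (h1.trans h2.symm))

lemma colGraph_deg1 {H : SimpleGraph V} {k : ℕ} {ψ : Sym2 V → Fin k} (hp : ProperEC H ψ)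
    {c d : Fin k} {z : V} (hc : ∀ t, H.Adj z t → ψ s(z, t) ≠ c) :
    ∀ w₁ w₂, (colGraph H ψ c d).Adj z w₁ → (colGraph H ψ c d).Adj z w₂ → w₁ = w₂ := by
  rintro w₁ w₂ ⟨a1, b1⟩ ⟨a2, b2⟩
  have e1 : ψ s(z, w₁) = d := b1.resolve_left (hc w₁ a1)
  have e2 : ψ s(z, w₂) = d := b2.resolve_left (hc w₂ a2)
  exact color_inj hp a1 a2 (e1.trans e2.symm)

lemma colGraph_deg1' {H : SimpleGraph V} {k : ℕ} {ψ : Sym2 V → Fin k} (hp : ProperEC H ψ)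
    {c d : Fin k} {z : V} (hd : ∀ t, H.Adj z t → ψ s(z, t) ≠ d) :
    ∀ w₁ w₂, (colGraph H ψ c d).Adj z w₁ → (colGraph H ψ c d).Adj z w₂ → w₁ = w₂ := by
  rintro w₁ w₂ ⟨a1, b1⟩ ⟨a2, b2⟩
  have e1 : ψ s(z, w₁) = c := b1.resolve_right (hd w₁ a1)
  have e2 : ψ s(z, w₂) = c := b2.resolve_right (hd w₂ a2)
  exact color_inj hp a1 a2 (e1.trans e2.symm)

lemma map_update_of_not_mem [DecidableEq V] {k : ℕ} {e : Sym2 V} {κ : Fin k}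
    {l : List (Sym2 V)} (h : e ∉ l) (φ : Sym2 V → Fin k) :
    l.map (Function.update φ e κ) = l.map φ :=
  List.map_congr_left (fun _ hf => Function.update_of_ne (ne_of_mem_of_not_mem hf h) _ _)

lemma proper_update [DecidableEq V] {G₀ : SimpleGraph V} {k : ℕ} {φ : Sym2 V → Fin k}
    (hp : ProperEC G₀ φ) {p q : V} (hpq : G₀.Adj p q) {κ : Fin k}
    (hP : ∀ z, G₀.Adj p z → z ≠ q → φ s(p, z) ≠ κ)
    (hQ : ∀ z, G₀.Adj q z → z ≠ p → φ s(q, z) ≠ κ) :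
    ProperEC G₀ (Function.update φ s(p, q) κ) := by
  have key : ∀ e ∈ G₀.edgeSet, e ≠ s(p, q) → (∃ x, x ∈ e ∧ x ∈ s(p, q)) →
      φ e ≠ κ := by
    intro e he hne ⟨t, hte, htpq⟩
    induction e using Sym2.ind with
    | _ c₁ d₁ =>
      rw [SimpleGraph.mem_edgeSet] at he
      rcases Sym2.mem_iff.mp hte with rfl | rfl
      · rcases Sym2.mem_iff.mp htpq with rfl | rfl
        · have : d₁ ≠ q := fun h => hne (by rw [h])
          exact hP d₁ he this
        · have : d₁ ≠ p := fun h => hne (by rw [h, Sym2.eq_swap])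
          exact hQ d₁ he this
      · rcases Sym2.mem_iff.mp htpq with rfl | rfl
        · have : c₁ ≠ q := fun h => hne (by rw [h, Sym2.eq_swap])
          rw [Sym2.eq_swap]
          exact hP c₁ he.symm this
        · have : c₁ ≠ p := fun h => hne (by rw [h])
          rw [Sym2.eq_swap]
          exact hQ c₁ he.symm this
  intro e₁ h₁ e₂ h₂ hne hsh
  by_cases he₁ : e₁ = s(p, q) <;> by_cases he₂ : e₂ = s(p, q)
  · exact absurd (he₁.trans he₂.symm) hne
  · subst he₁
    rw [Function.update_self, Function.update_of_ne he₂]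
    intro hcon
    obtain ⟨t, ht1, ht2⟩ := hsh
    exact key e₂ h₂ he₂ ⟨t, ht2, ht1⟩ hcon.symm
  · subst he₂
    rw [Function.update_self, Function.update_of_ne he₁]
    intro hcon
    obtain ⟨t, ht1, ht2⟩ := hsh
    exact key e₁ h₁ he₁ ⟨t, ht1, ht2⟩ hcon
  · rw [Function.update_of_ne he₁, Function.update_of_ne he₂]
    exact hp e₁ h₁ e₂ h₂ hne hsh

lemma cycle_two_colors [DecidableEq V] {G₀ : SimpleGraph V} {k : ℕ} {ψ : Sym2 V → Fin k}
    (hprop : ProperEC G₀ ψ) {r p q : V} {w : G₀.Walk r r} (hc : w.IsCycle)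
    (he : s(p, q) ∈ w.edges) (hcard : (w.edges.map ψ).toFinset.card ≤ 2) :
    ∃ (c : Fin k) (W : G₀.Walk p q) (m m' : V),
      c ≠ ψ s(p, q) ∧
      G₀.Adj p m ∧ s(p, m) ≠ s(p, q) ∧ ψ s(p, m) = c ∧
      G₀.Adj q m' ∧ s(q, m') ≠ s(p, q) ∧ ψ s(q, m') = c ∧
      s(p, q) ∉ W.edges ∧ (∀ f ∈ W.edges, ψ f = c ∨ ψ f = ψ s(p, q)) := by
  obtain ⟨W, hW1, hW2⟩ := cycle_edge_split hc he
  have hpq : G₀.Adj p q := w.adj_of_mem_edges he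
  have hTmem : ∀ f ∈ w.edges, ψ f ∈ (w.edges.map ψ).toFinset := by
    intro f hf
    rw [List.mem_toFinset]
    exact List.mem_map_of_mem (f := ψ) hf
  cases W with
  | nil => exact absurd rfl hpq.ne
  | @cons _ m _ hm W' =>
    have hfe : s(p, m) ∈ (Walk.cons hm W').edges := by
      rw [SimpleGraph.Walk.edges_cons]; exact List.mem_cons_self
    have hfne : s(p, m) ≠ s(p, q) := fun hcon => hW1 (hcon ▸ hfe)
    set c := ψ s(p, m) with hcdef
    have hcne : c ≠ ψ s(p, q) := by
      apply hprop s(p, m) ((SimpleGraph.mem_edgeSet G₀).mpr hm) s(p, q)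
        ((SimpleGraph.mem_edgeSet G₀).mpr hpq) hfne
      exact ⟨p, Sym2.mem_mk_left _ _, Sym2.mem_mk_left _ _⟩
    have hpair : ({ψ s(p, q), c} : Finset (Fin k)) = (w.edges.map ψ).toFinset := by
      apply Finset.eq_of_subset_of_card_le
      · intro t ht
        rw [Finset.mem_insert, Finset.mem_singleton] at ht
        rcases ht with rfl | rfl
        · exact hTmem _ he
        · exact hTmem _ (hW2 _ hfe)
      · rw [Finset.card_pair (Ne.symm hcne)]
        exact hcard
    have hall : ∀ f ∈ w.edges, ψ f = c ∨ ψ f = ψ s(p, q) := by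
      intro f hf
      have := hTmem f hf
      rw [← hpair, Finset.mem_insert, Finset.mem_singleton] at this
      tauto
    cases hrev : (Walk.cons hm W').reverse with
    | nil =>
      exfalso
      have := congrArg SimpleGraph.Walk.length hrev
      rw [SimpleGraph.Walk.length_reverse, SimpleGraph.Walk.length_nil] at this
      rw [SimpleGraph.Walk.length_cons] at this
      omega
    | @cons _ m' _ hm' W₂ =>
      have hfe' : s(q, m') ∈ (Walk.cons hm W').edges := by
        have : s(q, m') ∈ (Walk.cons hm' W₂).edges := by
          rw [SimpleGraph.Walk.edges_cons]; exact List.mem_cons_self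
        rw [← hrev, SimpleGraph.Walk.edges_reverse, List.mem_reverse] at this
        exact this
      have hfne' : s(q, m') ≠ s(p, q) := fun hcon => hW1 (hcon ▸ hfe')
      have hc' : ψ s(q, m') = c := by
        have hmem := hall _ (hW2 _ hfe')
        rcases hmem with h | h
        · exact h
        · exfalso
          refine hprop s(q, m') ((SimpleGraph.mem_edgeSet G₀).mpr hm') s(p, q)
            ((SimpleGraph.mem_edgeSet G₀).mpr hpq) hfne' ?_ h
          exact ⟨q, Sym2.mem_mk_left _ _, Sym2.mem_mk_right _ _⟩
      refine ⟨c, Walk.cons hm W', m, m', hcne, hm, hfne, rfl, hm', hfne', hc', hW1, ?_⟩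
      intro f hf
      exact hall f (hW2 f hf)

lemma isCycle_transfer {G₀ H₀ : SimpleGraph V} {r : V} {w : G₀.Walk r r}
    (hc : w.IsCycle) (hW : ∀ e ∈ w.edges, e ∈ H₀.edgeSet) :
    (w.transfer H₀ hW).IsCycle := by
  refine ⟨⟨⟨?_⟩, ?_⟩, ?_⟩
  · rw [SimpleGraph.Walk.edges_transfer]
    exact hc.isTrail.edges_nodup
  · intro hnil
    have hlen := congrArg SimpleGraph.Walk.length hnil
    rw [SimpleGraph.Walk.length_transfer] at hlen
    have h3 := hc.three_le_length
    rw [SimpleGraph.Walk.length_nil] at hlen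
    omega
  · rw [SimpleGraph.Walk.support_transfer]
    exact hc.support_nodup

lemma acyclic_update [DecidableEq V] {H : SimpleGraph V} {k : ℕ} {φ : Sym2 V → Fin k}
    (hφ : AcyclicEC H φ) {p q : V} {κ : Fin k}
    (hprop' : ProperEC H (Function.update φ s(p, q) κ))
    (hkill : ∀ c, c ≠ κ → ∀ m m' : V,
      H.Adj p m → s(p, m) ≠ s(p, q) → φ s(p, m) = c →
      H.Adj q m' → s(q, m') ≠ s(p, q) → φ s(q, m') = c →
      ∀ W : H.Walk p q, s(p, q) ∉ W.edges →
        (∀ f ∈ W.edges, φ f = c ∨ φ f = κ) → False) :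
    AcyclicEC H (Function.update φ s(p, q) κ) := by
  refine ⟨hprop', ?_⟩
  intro r w hc
  by_contra hcon
  push_neg at hcon
  by_cases hin : s(p, q) ∈ w.edges
  · obtain ⟨c, W, m, m', hcne, ham, hnem, hcm, ham', hnem', hcm', hWne, hWcol⟩ :=
      cycle_two_colors hprop' hc hin hcon
    rw [Function.update_self] at hcne
    rw [Function.update_of_ne hnem] at hcm
    rw [Function.update_of_ne hnem'] at hcm'
    refine hkill c hcne m m' ham hnem hcm ham' hnem' hcm' W hWne ?_
    intro f hf
    have hfne : f ≠ s(p, q) := ne_of_mem_of_not_mem hf hWne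
    have := hWcol f hf
    rw [Function.update_of_ne hfne, Function.update_self] at this
    exact this
  · have : (w.edges.map (Function.update φ s(p, q) κ)).toFinset.card =
        (w.edges.map φ).toFinset.card := by
      rw [map_update_of_not_mem hin]
    rw [this] at hcon
    exact absurd (hφ.2 r w hc) (not_lt.mpr hcon)

lemma proper_extend [DecidableEq V] {G H : SimpleGraph V} {u v : V} (huv : G.Adj u v)
    (hHadj : ∀ p' q' : V, H.Adj p' q' ↔ G.Adj p' q' ∧ s(p', q') ≠ s(u, v))
    {k : ℕ} {φ' : Sym2 V → Fin k}
    (hp : ProperEC H φ') {α : Fin k}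
    (hu : ∀ z, H.Adj u z → φ' s(u, z) ≠ α)
    (hv : ∀ z, H.Adj v z → φ' s(v, z) ≠ α) :
    ProperEC G (Function.update φ' s(u, v) α) := by
  have hmemH : ∀ e, e ∈ G.edgeSet → e ≠ s(u, v) → e ∈ H.edgeSet := by
    intro e he hne
    induction e using Sym2.ind with
    | _ c₁ d₁ =>
      rw [SimpleGraph.mem_edgeSet] at he ⊢
      exact (hHadj _ _).mpr ⟨he, hne⟩
  have key : ∀ e ∈ G.edgeSet, e ≠ s(u, v) → (∃ t, t ∈ e ∧ t ∈ s(u, v)) → φ' e ≠ α := by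
    intro e he hne ⟨t, hte, htuv⟩
    induction e using Sym2.ind with
    | _ c₁ d₁ =>
      rw [SimpleGraph.mem_edgeSet] at he
      rcases Sym2.mem_iff.mp hte with rfl | rfl
      · rcases Sym2.mem_iff.mp htuv with rfl | rfl
        · exact hu d₁ ((hHadj _ _).mpr ⟨he, hne⟩)
        · exact hv d₁ ((hHadj _ _).mpr ⟨he, hne⟩)
      · rcases Sym2.mem_iff.mp htuv with rfl | rfl
        · rw [Sym2.eq_swap]
          exact hu c₁ ((hHadj _ _).mpr ⟨he.symm, by rwa [Sym2.eq_swap]⟩)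
        · rw [Sym2.eq_swap]
          exact hv c₁ ((hHadj _ _).mpr ⟨he.symm, by rwa [Sym2.eq_swap]⟩)
  intro e₁ h₁ e₂ h₂ hne hsh
  by_cases he₁ : e₁ = s(u, v) <;> by_cases he₂ : e₂ = s(u, v)
  · exact absurd (he₁.trans he₂.symm) hne
  · subst he₁
    rw [Function.update_self, Function.update_of_ne he₂]
    intro hcon
    obtain ⟨t, ht1, ht2⟩ := hsh
    exact key e₂ h₂ he₂ ⟨t, ht2, ht1⟩ hcon.symm
  · subst he₂
    rw [Function.update_self, Function.update_of_ne he₁]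
    intro hcon
    obtain ⟨t, ht1, ht2⟩ := hsh
    exact key e₁ h₁ he₁ ⟨t, ht1, ht2⟩ hcon
  · rw [Function.update_of_ne he₁, Function.update_of_ne he₂]
    exact hp e₁ (hmemH _ h₁ he₁) e₂ (hmemH _ h₂ he₂) hne hsh

lemma acyclic_extend [DecidableEq V] {G H : SimpleGraph V} {u v : V} (huv : G.Adj u v)
    (hHadj : ∀ p' q' : V, H.Adj p' q' ↔ G.Adj p' q' ∧ s(p', q') ≠ s(u, v))
    {k : ℕ} {φ' : Sym2 V → Fin k}
    (hφ' : AcyclicEC H φ') {α : Fin k}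
    (hprop : ProperEC G (Function.update φ' s(u, v) α))
    (hkill : ∀ c, c ≠ α → ∀ m m' : V,
      H.Adj u m → φ' s(u, m) = c →
      H.Adj v m' → φ' s(v, m') = c →
      ∀ W : H.Walk u v,
        (∀ f ∈ W.edges, φ' f = c ∨ φ' f = α) → False) :
    AcyclicEC G (Function.update φ' s(u, v) α) := by
  refine ⟨hprop, ?_⟩
  intro r w hc
  by_contra hcon
  push_neg at hcon
  by_cases hin : s(u, v) ∈ w.edges
  · obtain ⟨c, W, m, m', hcne, ham, hnem, hcm, ham', hnem', hcm', hWne, hWcol⟩ :=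
      cycle_two_colors hprop hc hin hcon
    rw [Function.update_self] at hcne
    rw [Function.update_of_ne hnem] at hcm
    rw [Function.update_of_ne hnem'] at hcm'
    have hWH : ∀ f ∈ W.edges, f ∈ H.edgeSet := by
      intro f hf
      have hfne : f ≠ s(u, v) := ne_of_mem_of_not_mem hf hWne
      induction f using Sym2.ind with
      | _ c₁ d₁ =>
        rw [SimpleGraph.mem_edgeSet]
        exact (hHadj _ _).mpr ⟨W.adj_of_mem_edges hf, hfne⟩
    refine hkill c hcne m m' ((hHadj u m).mpr ⟨ham, hnem⟩) hcm
      ((hHadj v m').mpr ⟨ham', hnem'⟩) hcm' (W.transfer H hWH) ?_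
    intro f hf
    rw [SimpleGraph.Walk.edges_transfer] at hf
    have hfne : f ≠ s(u, v) := ne_of_mem_of_not_mem hf hWne
    have := hWcol f hf
    rw [Function.update_of_ne hfne, Function.update_self] at this
    exact this
  · have hWH : ∀ f ∈ w.edges, f ∈ H.edgeSet := by
      intro f hf
      have hfne : f ≠ s(u, v) := ne_of_mem_of_not_mem hf hin
      induction f using Sym2.ind with
      | _ c₁ d₁ =>
        rw [SimpleGraph.mem_edgeSet]
        exact (hHadj _ _).mpr ⟨w.adj_of_mem_edges hf, hfne⟩
    have hc' := isCycle_transfer hc hWH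
    have h2 := hφ'.2 r (w.transfer H hWH) hc'
    rw [SimpleGraph.Walk.edges_transfer] at h2
    have heq : (w.edges.map φ').toFinset.card =
        (w.edges.map (Function.update φ' s(u, v) α)).toFinset.card := by
      rw [map_update_of_not_mem hin]
    rw [heq] at h2
    exact absurd h2 (not_lt.mpr hcon)

lemma sym2_ne_of {p q r s' : V} (h1 : p ≠ r ∨ q ≠ s') (h2 : p ≠ s' ∨ q ≠ r) :
    s(p, q) ≠ s(r, s') := by
  intro hcon
  rw [Sym2.eq_iff] at hcon
  tauto

lemma walk_to_reach {H : SimpleGraph V} {k : ℕ} {φ₁ : Sym2 V → Fin k} {c d : Fin k} :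
    ∀ {p q : V} (W : H.Walk p q), (∀ f ∈ W.edges, φ₁ f = c ∨ φ₁ f = d) →
      (colGraph H φ₁ c d).Reachable p q := by
  intro p q W
  induction W with
  | nil => exact fun _ => Reachable.refl _
  | @cons s m t h W' ih =>
    intro hcol
    have h1 : (colGraph H φ₁ c d).Adj s m := by
      refine ⟨h, hcol _ ?_⟩
      rw [SimpleGraph.Walk.edges_cons]; exact List.mem_cons_self
    refine (h1.reachable).trans (ih ?_)
    intro f hf
    exact hcol f (by rw [SimpleGraph.Walk.edges_cons]; exact List.mem_cons_of_mem _ hf)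

open Classical in
/-- The finset of colors at a vertex. -/
noncomputable def CF [Fintype V] (H : SimpleGraph V) {k : ℕ} (φ : Sym2 V → Fin k) (w : V) :
    Finset (Fin k) :=
  (Finset.univ.filter (fun z => H.Adj w z)).image (fun z => φ s(w, z))

lemma mem_CF [Fintype V] {H : SimpleGraph V} {k : ℕ} {φ : Sym2 V → Fin k} {w : V}
    {c : Fin k} : c ∈ CF H φ w ↔ ∃ z, H.Adj w z ∧ φ s(w, z) = c := by
  classical
  simp [CF]

end Machinery

open Classical in
lemma CF_card_le [Fintype V] {H : SimpleGraph V} {k : ℕ} {φ : Sym2 V → Fin k} {w : V}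
    {t : Finset V} (h : ∀ z, H.Adj w z → z ∈ t) : (CF H φ w).card ≤ t.card := by
  classical
  apply Finset.card_le_card_of_surjOn (fun z => φ s(w, z))
  intro c hc
  simp only [Finset.coe_mem, Set.mem_image, Finset.mem_coe] at *
  obtain ⟨z, hz1, hz2⟩ := mem_CF.mp hc
  exact ⟨z, h z hz1, hz2⟩

/-- In an acyclically edge `k`-critical graph with `k ≥ Δ(G) + 2`, every neighbor
of a vertex of degree 3 has degree at least `k - Δ(G) + 2`. -/
theorem critical_neighbors_of_threeVertex
    {V : Type u} [Fintype V] (G : SimpleGraph V) [DecidableRel G.Adj] (k : ℕ)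
    (hG : AcyclicallyEdgeCritical G k) (hk : G.maxDegree + 2 ≤ k)
    (v : V) (hv : G.degree v = 3) :
    ∀ u, G.Adj v u → k - G.maxDegree + 2 ≤ G.degree u := by
  classical
  intro u hadj
  by_contra hdeg
  push_neg at hdeg
  set Δ := G.maxDegree with hΔdef
  have hΔ3 : 3 ≤ Δ := hv ▸ G.degree_le_maxDegree v
  have huv : G.Adj u v := hadj.symm
  have hvu_ne : v ≠ u := hadj.ne
  have hucard : (G.neighborFinset v).card = 3 := by
    rw [G.card_neighborFinset_eq_degree]; exact hv
  obtain ⟨p₁, p₂, p₃, h12, h13, h23, hset⟩ := Finset.card_eq_three.mp hucard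
  have humem : u ∈ G.neighborFinset v := (G.mem_neighborFinset v u).mpr hadj
  have hex : ∃ x y : V, x ≠ y ∧ u ≠ x ∧ u ≠ y ∧ G.neighborFinset v = {u, x, y} := by
    rw [hset] at humem ⊢
    simp only [Finset.mem_insert, Finset.mem_singleton] at humem
    rcases humem with rfl | rfl | rfl
    · exact ⟨p₂, p₃, h23, h12, h13, rfl⟩
    · refine ⟨p₁, p₃, h13, Ne.symm h12, h23, ?_⟩
      ext z; simp; tauto
    · refine ⟨p₁, p₂, h12, Ne.symm h13, Ne.symm h23, ?_⟩
      ext z; simp; tauto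
  obtain ⟨x, y, hxy, hux, huy, hnbrs⟩ := hex
  have hmemnbr : ∀ z, G.Adj v z ↔ (z = u ∨ z = x ∨ z = y) := by
    intro z
    rw [← G.mem_neighborFinset, hnbrs]; simp
  have hvx : G.Adj v x := (hmemnbr x).mpr (Or.inr (Or.inl rfl))
  have hvy : G.Adj v y := (hmemnbr y).mpr (Or.inr (Or.inr rfl))
  have hvx_ne : v ≠ x := hvx.ne
  have hvy_ne : v ≠ y := hvy.ne
  set H := G.deleteEdges {s(u, v)} with hHdef
  have hHadj : ∀ p' q' : V, H.Adj p' q' ↔ G.Adj p' q' ∧ s(p', q') ≠ s(u, v) := by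
    intro p' q'; rw [hHdef, SimpleGraph.deleteEdges_adj]; simp
  have hHle : H ≤ G := by rw [hHdef]; exact SimpleGraph.deleteEdges_le _
  have hHne : H ≠ G := by
    intro hcon
    have h1 : ¬ H.Adj u v := by rw [hHadj]; simp
    rw [hcon] at h1; exact h1 huv
  obtain ⟨φ, hφ⟩ := hG.2 H hHle hHne
  have hprop := hφ.1
  have hHvx : H.Adj v x :=
    (hHadj v x).mpr ⟨hvx, sym2_ne_of (Or.inl hvu_ne) (Or.inr (Ne.symm hux))⟩
  have hHvy : H.Adj v y :=
    (hHadj v y).mpr ⟨hvy, sym2_ne_of (Or.inl hvu_ne) (Or.inr (Ne.symm huy))⟩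
  have hHvz : ∀ z, H.Adj v z → z = x ∨ z = y := by
    intro z hz
    rw [hHadj] at hz
    rcases (hmemnbr z).mp hz.1 with rfl | rfl | rfl
    · exact absurd Sym2.eq_swap hz.2
    · exact Or.inl rfl
    · exact Or.inr rfl
  have hHuz : ∀ z, H.Adj u z → z ≠ v := by
    intro z hz
    rw [hHadj] at hz
    intro hcon; subst hcon; exact hz.2 rfl
  have hGuH : ∀ z, G.Adj u z → z ≠ v → H.Adj u z := by
    intro z hz hne
    exact (hHadj u z).mpr ⟨hz, sym2_ne_of (Or.inr hne) (Or.inl huv.ne)⟩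
  set a := φ s(v, x) with hadef
  set b := φ s(v, y) with hbdef
  have hab : a ≠ b := by
    apply hprop s(v, x) ((SimpleGraph.mem_edgeSet H).mpr hHvx) s(v, y)
      ((SimpleGraph.mem_edgeSet H).mpr hHvy)
      (sym2_ne_of (Or.inr hxy) (Or.inl hvy_ne))
    exact ⟨v, Sym2.mem_mk_left _ _, Sym2.mem_mk_left _ _⟩
  have hCFu : (CF H φ u).card + 1 ≤ G.degree u := by
    have h1 : (CF H φ u).card ≤ ((G.neighborFinset u).erase v).card := by
      apply CF_card_le
      intro z hz
      rw [Finset.mem_erase]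
      exact ⟨hHuz z hz, (G.mem_neighborFinset u z).mpr ((hHadj u z).mp hz).1⟩
    rw [Finset.card_erase_of_mem ((G.mem_neighborFinset u v).mpr huv)] at h1
    rw [G.card_neighborFinset_eq_degree] at h1
    have h2 : 1 ≤ G.degree u := by
      rw [← G.card_neighborFinset_eq_degree]
      exact Finset.card_pos.mpr ⟨v, (G.mem_neighborFinset u v).mpr huv⟩
    omega
  have hCFΔ : ∀ w : V, (CF H φ w).card ≤ Δ := by
    intro w
    have h1 : (CF H φ w).card ≤ (G.neighborFinset w).card := by
      apply CF_card_le
      intro z hz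
      exact (G.mem_neighborFinset w z).mpr ((hHadj w z).mp hz).1
    rw [G.card_neighborFinset_eq_degree] at h1
    exact le_trans h1 (G.degree_le_maxDegree w)
  have hm : (CF H φ u).card + Δ ≤ k := by
    have h1 : G.degree u ≤ Δ := G.degree_le_maxDegree u
    omega
  have haCFx : a ∈ CF H φ x := mem_CF.mpr ⟨v, hHvx.symm, by rw [Sym2.eq_swap, ← hadef]⟩
  have hbCFy : b ∈ CF H φ y := mem_CF.mpr ⟨v, hHvy.symm, by rw [Sym2.eq_swap, ← hbdef]⟩
  set S := (Finset.univ : Finset (Fin k)) \ (CF H φ u ∪ {a, b}) with hSdef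
  have hSmem : ∀ α, α ∈ S ↔ (α ∉ CF H φ u ∧ α ≠ a ∧ α ≠ b) := by
    intro α; rw [hSdef]; simp only [Finset.mem_sdiff, Finset.mem_univ, true_and,
      Finset.mem_union, Finset.mem_insert, Finset.mem_singleton]; tauto
  have hScard : S.card + (CF H φ u ∪ {a, b}).card = k := by
    rw [hSdef, Finset.card_sdiff_add_card_eq_card (Finset.subset_univ _)]
    simp
  have hSbound : k ≤ S.card + (CF H φ u).card + 2 := by
    have h1 : (CF H φ u ∪ {a, b}).card ≤ (CF H φ u).card + 2 := by
      refine le_trans (Finset.card_union_le _ _) ?_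
      have h2 : ({a, b} : Finset (Fin k)).card ≤ 2 := Finset.card_insert_le a {b} |>.trans (by simp)
      omega
    omega
  have extract : ∀ φ₁ : Sym2 V → Fin k, AcyclicEC H φ₁ →
      ∀ α : Fin k, (∀ z, H.Adj u z → φ₁ s(u, z) ≠ α) → (∀ z, H.Adj v z → φ₁ s(v, z) ≠ α) →
      ∃ c : Fin k, c ≠ α ∧ (∃ mz, H.Adj u mz ∧ φ₁ s(u, mz) = c) ∧
        (∃ mw, H.Adj v mw ∧ φ₁ s(v, mw) = c) ∧ (colGraph H φ₁ c α).Reachable u v := by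
    intro φ₁ hφ₁ α hαu hαv
    by_contra hno
    push_neg at hno
    refine hG.1 ⟨Function.update φ₁ s(u, v) α, ?_⟩
    have hp1 := proper_extend huv hHadj hφ₁.1 hαu hαv
    refine acyclic_extend huv hHadj hφ₁ hp1 ?_
    intro c hc m m' h1 h2 h3 h4 W hWcol
    exact hno c hc ⟨m, h1, h2⟩ ⟨m', h3, h4⟩ (walk_to_reach W hWcol)
  have hcase2 : ∀ (xx yy : V) (aa bb : Fin k),
      xx ≠ yy → u ≠ xx → u ≠ yy → v ≠ xx → v ≠ yy →
      H.Adj v xx → H.Adj v yy →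
      (∀ z, H.Adj v z → z = xx ∨ z = yy) →
      aa = φ s(v, xx) → bb = φ s(v, yy) → aa ≠ bb →
      ({a, b} : Finset (Fin k)) = {aa, bb} →
      (∀ α, α ∈ S ↔ (α ∉ CF H φ u ∧ α ≠ aa ∧ α ≠ bb)) →
      aa ∈ CF H φ u → bb ∉ CF H φ u →
      aa ∈ CF H φ xx → bb ∈ CF H φ yy → False := by
    intro xx yy aa bb hxy' hux' huy' hvx' hvy' hHvx' hHvy' hHvz' hadef' hbdef' hab' hpair
      hSmem' hain' hbin' haCFx' hbCFy'
    -- improved size bound on S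
    have hS2 : k ≤ S.card + (CF H φ u).card + 1 := by
      have hsub : CF H φ u ∪ {a, b} ⊆ insert bb (CF H φ u) := by
        rw [hpair]
        intro t ht
        rcases Finset.mem_union.mp ht with h | h
        · exact Finset.mem_insert_of_mem h
        · rcases Finset.mem_insert.mp h with rfl | h2
          · exact Finset.mem_insert_of_mem hain'
          · rw [Finset.mem_singleton] at h2
            exact h2 ▸ Finset.mem_insert_self _ _
      have h1 := Finset.card_le_card hsub
      have h2 := Finset.card_insert_le bb (CF H φ u)
      omega
    -- the unique aa-neighbor of u
    obtain ⟨ua, hua1, hua2⟩ := mem_CF.mp hain'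
    have huane : ua ≠ v := hHuz ua hua1
    have haCFua : aa ∈ CF H φ ua :=
      mem_CF.mpr ⟨u, hua1.symm, by rw [Sym2.eq_swap]; exact hua2⟩
    -- key1 : every α ∈ S gives an (aa, α) connection
    have key1 : ∀ α, α ∈ S → (colGraph H φ aa α).Reachable u v := by
      intro α hα
      have hα' := (hSmem' α).mp hα
      obtain ⟨c, hc1, ⟨mz, hmz1, hmz2⟩, ⟨mw, hmw1, hmw2⟩, hreach⟩ := extract φ hφ α
        (fun z hz hcol => hα'.1 (mem_CF.mpr ⟨z, hz, hcol⟩))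
        (fun z hz hcol => by
          rcases hHvz' z hz with rfl | rfl
          · exact hα'.2.1 ((hadef'.trans hcol).symm)
          · exact hα'.2.2 ((hbdef'.trans hcol).symm))
      have hcCF : c ∈ CF H φ u := mem_CF.mpr ⟨mz, hmz1, hmz2⟩
      rcases hHvz' mw hmw1 with rfl | rfl
      · have hca : c = aa := (hadef'.trans hmw2).symm
        rw [hca] at hreach; exact hreach
      · have hcb : c = bb := (hbdef'.trans hmw2).symm
        exact absurd (hcb ▸ hcCF) hbin'
    -- α ∈ CF xx for all α ∈ S
    have hacx : ∀ α, α ∈ S → α ∈ CF H φ xx := by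
      intro α hαS
      have hα' := (hSmem' α).mp hαS
      by_contra hnot
      have hvnbr : ∀ t, (colGraph H φ aa α).Adj v t → t = xx := by
        rintro t ⟨ht1, ht2⟩
        rcases hHvz' t ht1 with rfl | rfl
        · rfl
        · exfalso
          rcases ht2 with h | h
          · exact hab' (hbdef'.trans h).symm
          · exact hα'.2.2 ((hbdef'.trans h).symm)
      have hv1 : ∀ w₁ w₂, (colGraph H φ aa α).Adj v w₁ → (colGraph H φ aa α).Adj v w₂ →
          w₁ = w₂ := fun w₁ w₂ h1 h2 => (hvnbr w₁ h1).trans (hvnbr w₂ h2).symm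
      have hu1 := colGraph_deg1' hprop (c := aa) (d := α) (z := u)
        (fun t ht hcol => hα'.1 (mem_CF.mpr ⟨t, ht, hcol⟩))
      have hx1 := colGraph_deg1' hprop (c := aa) (d := α) (z := xx)
        (fun t ht hcol => hnot (mem_CF.mpr ⟨t, ht, hcol⟩))
      have hvxr : (colGraph H φ aa α).Reachable v xx :=
        SimpleGraph.Adj.reachable ⟨hHvx', Or.inl hadef'.symm⟩
      exact hux' (three_leaves (colGraph_deg2 hprop aa α) hv1 hu1 hx1 hvu_ne hvx'
        (key1 α hαS).symm hvxr)
    -- α ∈ CF ua for all α ∈ S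
    have hacua : ∀ α, α ∈ S → α ∈ CF H φ ua := by
      intro α hαS
      have hα' := (hSmem' α).mp hαS
      by_contra hnot
      have hunbr : ∀ t, (colGraph H φ aa α).Adj u t → t = ua := by
        rintro t ⟨ht1, ht2⟩
        rcases ht2 with h | h
        · exact color_inj hprop ht1 hua1 (h.trans hua2.symm)
        · exact absurd (mem_CF.mpr ⟨t, ht1, h⟩) hα'.1
      have hu1 : ∀ w₁ w₂, (colGraph H φ aa α).Adj u w₁ → (colGraph H φ aa α).Adj u w₂ →
          w₁ = w₂ := fun w₁ w₂ h1 h2 => (hunbr w₁ h1).trans (hunbr w₂ h2).symm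
      have hvnbr : ∀ t, (colGraph H φ aa α).Adj v t → t = xx := by
        rintro t ⟨ht1, ht2⟩
        rcases hHvz' t ht1 with rfl | rfl
        · rfl
        · exfalso
          rcases ht2 with h | h
          · exact hab' (hbdef'.trans h).symm
          · exact hα'.2.2 ((hbdef'.trans h).symm)
      have hv1 : ∀ w₁ w₂, (colGraph H φ aa α).Adj v w₁ → (colGraph H φ aa α).Adj v w₂ →
          w₁ = w₂ := fun w₁ w₂ h1 h2 => (hvnbr w₁ h1).trans (hvnbr w₂ h2).symm
      have hua1' := colGraph_deg1' hprop (c := aa) (d := α) (z := ua)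
        (fun t ht hcol => hnot (mem_CF.mpr ⟨t, ht, hcol⟩))
      have huuar : (colGraph H φ aa α).Reachable u ua :=
        SimpleGraph.Adj.reachable ⟨hua1, Or.inl hua2⟩
      exact (Ne.symm huane) (three_leaves (colGraph_deg2 hprop aa α) hu1 hv1 hua1'
        huv.ne hua1.ne (key1 α hαS) huuar)
    -- rigidity : CF xx = insert aa S and CF ua = insert aa S
    have haS : aa ∉ S := fun h => ((hSmem' aa).mp h).2.1 rfl
    have hbS : bb ∉ S := fun h => ((hSmem' bb).mp h).2.2 rfl
    have hCxEq : insert aa S = CF H φ xx := by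
      apply Finset.eq_of_subset_of_card_le
      · intro t ht
        rcases Finset.mem_insert.mp ht with rfl | htS
        · exact haCFx'
        · exact hacx t htS
      · rw [Finset.card_insert_of_notMem haS]
        have := hCFΔ xx
        omega
    have hCuaEq : insert aa S = CF H φ ua := by
      apply Finset.eq_of_subset_of_card_le
      · intro t ht
        rcases Finset.mem_insert.mp ht with rfl | htS
        · exact haCFua
        · exact hacua t htS
      · rw [Finset.card_insert_of_notMem haS]
        have := hCFΔ ua
        omega
    have hbx : bb ∉ CF H φ xx := by
      rw [← hCxEq]
      intro h
      rcases Finset.mem_insert.mp h with h | h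
      · exact hab' h.symm
      · exact hbS h
    have hbua : bb ∉ CF H φ ua := by
      rw [← hCuaEq]
      intro h
      rcases Finset.mem_insert.mp h with h | h
      · exact hab' h.symm
      · exact hbS h
    -- pick β ∈ CF u, β ≠ aa
    have hmlow : 2 ≤ (CF H φ u).card := by
      have h1 : S.card + 1 ≤ (CF H φ xx).card := by
        rw [← hCxEq, Finset.card_insert_of_notMem haS]
      have h2 := hCFΔ xx
      omega
    obtain ⟨β, hβCu, hβaa⟩ := Finset.exists_mem_ne (s := CF H φ u) (by omega) aa
    have hβS : β ∉ S := fun h => ((hSmem' β).mp h).1 hβCu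
    have hβbb : β ≠ bb := fun h => hbin' (h ▸ hβCu)
    have hβx : β ∉ CF H φ xx := by
      rw [← hCxEq]
      intro h
      rcases Finset.mem_insert.mp h with h | h
      · exact hβaa h
      · exact hβS h
    -- world φ'' : recolor the edge u-ua with bb
    set φ'' := Function.update φ s(u, ua) bb with hφ''def
    have hφ''val : ∀ f, f ≠ s(u, ua) → φ'' f = φ f :=
      fun f hf => Function.update_of_ne hf _ _
    have hvuua : s(v, xx) ≠ s(u, ua) ∧ s(v, yy) ≠ s(u, ua) := by
      constructor
      · exact sym2_ne_of (Or.inl hvu_ne) (Or.inl (Ne.symm huane))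
      · exact sym2_ne_of (Or.inl hvu_ne) (Or.inl (Ne.symm huane))
    have hprop'' : ProperEC H φ'' := by
      apply proper_update hprop hua1
      · intro z hz hzua hcol
        exact hbin' (mem_CF.mpr ⟨z, hz, hcol⟩)
      · intro z hz hzu hcol
        exact hbua (mem_CF.mpr ⟨z, hz, hcol⟩)
    have hφ'' : AcyclicEC H φ'' := by
      apply acyclic_update hφ hprop''
      intro c hc m m' h1 h2 h3 h4 h5 h6 W hW1 hW2
      have hcCF : c ∈ CF H φ u := mem_CF.mpr ⟨m, h1, h3⟩
      have hcaa : c ≠ aa := by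
        intro hcon
        apply h2
        have : m = ua := color_inj hprop h1 hua1 (h3.trans (hcon ▸ hua2.symm))
        rw [this]
      have hcua : c ∈ CF H φ ua := mem_CF.mpr ⟨m', h4, h6⟩
      rw [← hCuaEq] at hcua
      rcases Finset.mem_insert.mp hcua with h | h
      · exact hcaa h
      · exact ((hSmem' c).mp h).1 hcCF
    -- key2 : every α ∈ S gives a (bb, α) connection in φ''
    have key2 : ∀ α, α ∈ S → (colGraph H φ'' bb α).Reachable u v := by
      intro α hαS
      have hα' := (hSmem' α).mp hαS
      have hαu'' : ∀ z, H.Adj u z → φ'' s(u, z) ≠ α := by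
        intro z hz hcol
        by_cases hze : s(u, z) = s(u, ua)
        · rw [hze, hφ''def, Function.update_self] at hcol
          exact hα'.2.2 hcol.symm
        · rw [hφ''val _ hze] at hcol
          exact hα'.1 (mem_CF.mpr ⟨z, hz, hcol⟩)
      obtain ⟨c, hc1, ⟨mz, hmz1, hmz2⟩, ⟨mw, hmw1, hmw2⟩, hreach⟩ := extract φ'' hφ'' α
        hαu''
        (fun z hz hcol => by
          rcases hHvz' z hz with rfl | rfl
          · rw [hφ''val _ hvuua.1] at hcol
            exact hα'.2.1 ((hadef'.trans hcol).symm)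
          · rw [hφ''val _ hvuua.2] at hcol
            exact hα'.2.2 ((hbdef'.trans hcol).symm))
      have hcbb : c = bb := by
        rcases hHvz' mw hmw1 with rfl | rfl
        · exfalso
          rw [hφ''val _ hvuua.1] at hmw2
          have hcaa : c = aa := (hadef'.trans hmw2).symm
          subst hcaa
          by_cases hze : s(u, mz) = s(u, ua)
          · rw [hze, hφ''def, Function.update_self] at hmz2
            exact hab' hmz2.symm
          · rw [hφ''val _ hze] at hmz2
            exact hze (by
              have : mz = ua := color_inj hprop hmz1 hua1 (hmz2.trans hua2.symm)
              rw [this])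
        · rw [hφ''val _ hvuua.2] at hmw2
          exact (hbdef'.trans hmw2).symm
      rw [hcbb] at hreach
      exact hreach
    -- y-side facts
    have hyu : yy ≠ u := Ne.symm huy'
    have hyua : yy ≠ ua := by
      intro h
      exact hbua (h ▸ hbCFy')
    have hyedge : ∀ t : V, s(yy, t) ≠ s(u, ua) :=
      fun t => sym2_ne_of (Or.inl hyu) (Or.inl hyua)
    have hacy : ∀ α, α ∈ S → α ∈ CF H φ yy := by
      intro α hαS
      have hα' := (hSmem' α).mp hαS
      by_contra hnot
      have hvnbr : ∀ t, (colGraph H φ'' bb α).Adj v t → t = yy := by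
        rintro t ⟨ht1, ht2⟩
        rcases hHvz' t ht1 with rfl | rfl
        · exfalso
          rw [hφ''val _ hvuua.1] at ht2
          rcases ht2 with h | h
          · exact hab' (hadef'.trans h)
          · exact hα'.2.1 ((hadef'.trans h).symm)
        · rfl
      have hv1 : ∀ w₁ w₂, (colGraph H φ'' bb α).Adj v w₁ → (colGraph H φ'' bb α).Adj v w₂ →
          w₁ = w₂ := fun w₁ w₂ h1 h2 => (hvnbr w₁ h1).trans (hvnbr w₂ h2).symm
      have hu1 := colGraph_deg1' hprop'' (c := bb) (d := α) (z := u)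
        (fun t ht hcol => by
          by_cases hze : s(u, t) = s(u, ua)
          · rw [hze, hφ''def, Function.update_self] at hcol
            exact hα'.2.2 hcol.symm
          · rw [hφ''val _ hze] at hcol
            exact hα'.1 (mem_CF.mpr ⟨t, ht, hcol⟩))
      have hy1 := colGraph_deg1' hprop'' (c := bb) (d := α) (z := yy)
        (fun t ht hcol => by
          rw [hφ''val _ (hyedge t)] at hcol
          exact hnot (mem_CF.mpr ⟨t, ht, hcol⟩))
      have hvyr : (colGraph H φ'' bb α).Reachable v yy := by
        refine SimpleGraph.Adj.reachable ⟨hHvy', Or.inl ?_⟩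
        rw [hφ''val _ hvuua.2]
        exact hbdef'.symm
      exact huy' (three_leaves (colGraph_deg2 hprop'' bb α) hv1 hu1 hy1 hvu_ne hvy'
        (key2 α hαS).symm hvyr)
    -- rigidity at yy
    have hCyEq : insert bb S = CF H φ yy := by
      apply Finset.eq_of_subset_of_card_le
      · intro t ht
        rcases Finset.mem_insert.mp ht with rfl | htS
        · exact hbCFy'
        · exact hacy t htS
      · rw [Finset.card_insert_of_notMem hbS]
        have := hCFΔ yy
        omega
    have hay : aa ∉ CF H φ yy := by
      rw [← hCyEq]
      intro h
      rcases Finset.mem_insert.mp h with h | h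
      · exact hab' h
      · exact haS h
    have hβy : β ∉ CF H φ yy := by
      rw [← hCyEq]
      intro h
      rcases Finset.mem_insert.mp h with h | h
      · exact hβbb h
      · exact hβS h
    -- world φ₂ : recolor v-yy with β
    set φ₂ := Function.update φ s(v, yy) β with hφ₂def
    have hφ₂val : ∀ f, f ≠ s(v, yy) → φ₂ f = φ f :=
      fun f hf => Function.update_of_ne hf _ _
    have hvxvy : s(v, xx) ≠ s(v, yy) :=
      sym2_ne_of (Or.inr hxy') (Or.inl hvy')
    have hprop₂ : ProperEC H φ₂ := by
      apply proper_update hprop hHvy'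
      · intro z hz hzy hcol
        rcases hHvz' z hz with rfl | rfl
        · exact hβaa (hadef'.trans hcol).symm
        · exact hzy rfl
      · intro z hz hzv hcol
        exact hβy (mem_CF.mpr ⟨z, hz, hcol⟩)
    have hφ₂ : AcyclicEC H φ₂ := by
      apply acyclic_update hφ hprop₂
      intro c hc m m' h1 h2 h3 h4 h5 h6 W hW1 hW2
      have hmx : m = xx := by
        rcases hHvz' m h1 with rfl | rfl
        · rfl
        · exact absurd rfl h2
      rw [hmx] at h3
      have hcaa : c = aa := (hadef'.trans h3).symm
      rw [hcaa] at h6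
      exact hay (mem_CF.mpr ⟨m', h4, h6⟩)
    -- world φ₃ : further recolor v-xx with bb
    set φ₃ := Function.update φ₂ s(v, xx) bb with hφ₃def
    have hφ₃val : ∀ f, f ≠ s(v, xx) → f ≠ s(v, yy) → φ₃ f = φ f := by
      intro f h1 h2
      rw [hφ₃def, Function.update_of_ne h1, hφ₂val _ h2]
    have hxedge : ∀ t : V, s(xx, t) ≠ s(v, yy) :=
      fun t => sym2_ne_of (Or.inl (Ne.symm hvx')) (Or.inl hxy')
    have hprop₃ : ProperEC H φ₃ := by
      apply proper_update hprop₂ hHvx'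
      · intro z hz hzx hcol
        rcases hHvz' z hz with rfl | rfl
        · exact hzx rfl
        · rw [hφ₂def, Function.update_self] at hcol
          exact hβbb hcol
      · intro z hz hzv hcol
        rw [hφ₂val _ (hxedge z)] at hcol
        exact hbx (mem_CF.mpr ⟨z, hz, hcol⟩)
    have hφ₃ : AcyclicEC H φ₃ := by
      apply acyclic_update hφ₂ hprop₃
      intro c hc m m' h1 h2 h3 h4 h5 h6 W hW1 hW2
      have hmy : m = yy := by
        rcases hHvz' m h1 with rfl | rfl
        · exact absurd rfl h2
        · rfl
      rw [hmy] at h3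
      rw [hφ₂def, Function.update_self] at h3
      rw [← h3] at h6
      rw [hφ₂val _ (hxedge m')] at h6
      exact hβx (mem_CF.mpr ⟨m', h4, h6⟩)
    -- key3 : reachability yy-u in colGraph H φ β α for each α ∈ S
    have key3 : ∀ α, α ∈ S → (colGraph H φ β α).Reachable yy u := by
      intro α hαS
      have hα' := (hSmem' α).mp hαS
      have hαβ : α ≠ β := fun h => hβS (h ▸ hαS)
      have huedge : ∀ t : V, s(u, t) ≠ s(v, xx) ∧ s(u, t) ≠ s(v, yy) :=
        fun t => ⟨sym2_ne_of (Or.inl huv.ne) (Or.inl hux'),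
          sym2_ne_of (Or.inl huv.ne) (Or.inl huy')⟩
      obtain ⟨c, hc1, ⟨mz, hmz1, hmz2⟩, ⟨mw, hmw1, hmw2⟩, hreach⟩ := extract φ₃ hφ₃ α
        (fun z hz hcol => by
          rw [hφ₃val _ (huedge z).1 (huedge z).2] at hcol
          exact hα'.1 (mem_CF.mpr ⟨z, hz, hcol⟩))
        (fun z hz hcol => by
          rcases hHvz' z hz with rfl | rfl
          · rw [hφ₃def, Function.update_self] at hcol
            exact hα'.2.2 hcol.symm
          · rw [hφ₃def, Function.update_of_ne (Ne.symm hvxvy), hφ₂def,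
              Function.update_self] at hcol
            exact hαβ hcol.symm)
      have hcβ : c = β := by
        rcases hHvz' mw hmw1 with rfl | rfl
        · exfalso
          rw [hφ₃def, Function.update_self] at hmw2
          rw [hφ₃val _ (huedge mz).1 (huedge mz).2] at hmz2
          exact hbin' (mem_CF.mpr ⟨mz, hmz1, hmw2 ▸ hmz2⟩)
        · rw [hφ₃def, Function.update_of_ne (Ne.symm hvxvy), hφ₂def,
            Function.update_self] at hmw2
          exact hmw2.symm
      rw [hcβ] at hreach
      -- surgery : strip the edge v-yy
      apply reach_side (B' := colGraph H φ₃ β α) (v := v) (z := yy) (w := u)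
        ?_ ?_ huv.ne hreach
      · rintro p q ⟨hpq1, hpq2⟩
        by_cases hevy : s(p, q) = s(v, yy)
        · exact Or.inr hevy
        · by_cases hevx : s(p, q) = s(v, xx)
          · exfalso
            rw [hevx, hφ₃def, Function.update_self] at hpq2
            rcases hpq2 with h | h
            · exact hβbb h.symm
            · exact hα'.2.2 h.symm
          · left
            refine ⟨hpq1, ?_⟩
            rwa [hφ₃val _ hevx hevy] at hpq2
      · rintro t ⟨ht1, ht2⟩
        rcases hHvz' t ht1 with rfl | rfl
        · exfalso
          rw [hφ₃def, Function.update_self] at ht2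
          rcases ht2 with h | h
          · exact hβbb h.symm
          · exact hα'.2.2 h.symm
        · rfl
    -- world φ₄ : recolor v-xx with β (from φ)
    set φ₄ := Function.update φ s(v, xx) β with hφ₄def
    have hφ₄val : ∀ f, f ≠ s(v, xx) → φ₄ f = φ f :=
      fun f hf => Function.update_of_ne hf _ _
    have hprop₄ : ProperEC H φ₄ := by
      apply proper_update hprop hHvx'
      · intro z hz hzx hcol
        rcases hHvz' z hz with rfl | rfl
        · exact hzx rfl
        · exact hβbb (hbdef'.trans hcol).symm
      · intro z hz hzv hcol
        exact hβx (mem_CF.mpr ⟨z, hz, hcol⟩)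
    have hφ₄ : AcyclicEC H φ₄ := by
      apply acyclic_update hφ hprop₄
      intro c hc m m' h1 h2 h3 h4 h5 h6 W hW1 hW2
      have hmy : m = yy := by
        rcases hHvz' m h1 with rfl | rfl
        · exact absurd rfl h2
        · rfl
      rw [hmy] at h3
      have hcbb : c = bb := (hbdef'.trans h3).symm
      rw [hcbb] at h6
      exact hbx (mem_CF.mpr ⟨m', h4, h6⟩)
    -- key4 : reachability xx-u in colGraph H φ β α for each α ∈ S
    have key4 : ∀ α, α ∈ S → (colGraph H φ β α).Reachable xx u := by
      intro α hαS
      have hα' := (hSmem' α).mp hαS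
      have hαβ : α ≠ β := fun h => hβS (h ▸ hαS)
      have huedge : ∀ t : V, s(u, t) ≠ s(v, xx) :=
        fun t => sym2_ne_of (Or.inl huv.ne) (Or.inl hux')
      obtain ⟨c, hc1, ⟨mz, hmz1, hmz2⟩, ⟨mw, hmw1, hmw2⟩, hreach⟩ := extract φ₄ hφ₄ α
        (fun z hz hcol => by
          rw [hφ₄val _ (huedge z)] at hcol
          exact hα'.1 (mem_CF.mpr ⟨z, hz, hcol⟩))
        (fun z hz hcol => by
          rcases hHvz' z hz with rfl | rfl
          · rw [hφ₄def, Function.update_self] at hcol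
            exact hαβ hcol.symm
          · rw [hφ₄val _ (Ne.symm hvxvy)] at hcol
            exact hα'.2.2 ((hbdef'.trans hcol).symm))
      have hcβ : c = β := by
        rcases hHvz' mw hmw1 with rfl | rfl
        · rw [hφ₄def, Function.update_self] at hmw2
          exact hmw2.symm
        · exfalso
          rw [hφ₄val _ (Ne.symm hvxvy)] at hmw2
          have : c = bb := (hbdef'.trans hmw2).symm
          rw [hφ₄val _ (huedge mz)] at hmz2
          exact hbin' (mem_CF.mpr ⟨mz, hmz1, this ▸ hmz2⟩)
      rw [hcβ] at hreach
      apply reach_side (B' := colGraph H φ₄ β α) (v := v) (z := xx) (w := u)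
        ?_ ?_ huv.ne hreach
      · rintro p q ⟨hpq1, hpq2⟩
        by_cases hevx : s(p, q) = s(v, xx)
        · exact Or.inr hevx
        · left
          refine ⟨hpq1, ?_⟩
          rwa [hφ₄val _ hevx] at hpq2
      · rintro t ⟨ht1, ht2⟩
        rcases hHvz' t ht1 with rfl | rfl
        · rfl
        · exfalso
          rw [hφ₄val _ (Ne.symm hvxvy)] at ht2
          rcases ht2 with h | h
          · exact hβbb (hbdef'.trans h).symm
          · exact hα'.2.2 ((hbdef'.trans h).symm)
    -- final contradiction via three leaves in colGraph H φ β α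
    have hSne : S.Nonempty := by
      rw [← Finset.card_pos]
      omega
    obtain ⟨α, hαS⟩ := hSne
    have hα' := (hSmem' α).mp hαS
    have hu1 := colGraph_deg1' hprop (c := β) (d := α) (z := u)
      (fun t ht hcol => hα'.1 (mem_CF.mpr ⟨t, ht, hcol⟩))
    have hx1 := colGraph_deg1 hprop (c := β) (d := α) (z := xx)
      (fun t ht hcol => hβx (mem_CF.mpr ⟨t, ht, hcol⟩))
    have hy1 := colGraph_deg1 hprop (c := β) (d := α) (z := yy)
      (fun t ht hcol => hβy (mem_CF.mpr ⟨t, ht, hcol⟩))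
    exact hxy' (three_leaves (colGraph_deg2 hprop β α) hu1 hx1 hy1
      hux' huy' (key4 α hαS).symm (key3 α hαS).symm)
  by_cases hain : a ∈ CF H φ u <;> by_cases hbin : b ∈ CF H φ u
  · -- Case 3 : a, b ∈ CF u
    have hunion : CF H φ u ∪ {a, b} = CF H φ u := by
      apply Finset.union_eq_left.mpr
      intro t ht
      rcases Finset.mem_insert.mp ht with rfl | ht
      · exact hain
      · rw [Finset.mem_singleton] at ht; subst ht; exact hbin
    have hSge : Δ ≤ S.card := by
      rw [hunion] at hScard
      omega
    have key : ∀ α, α ∈ S →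
        (colGraph H φ a α).Reachable u v ∨ (colGraph H φ b α).Reachable u v := by
      intro α hα
      rw [hSmem] at hα
      obtain ⟨c, hc1, ⟨mz, hmz1, hmz2⟩, ⟨mw, hmw1, hmw2⟩, hreach⟩ := extract φ hφ α
        (fun z hz hcol => hα.1 (mem_CF.mpr ⟨z, hz, hcol⟩))
        (fun z hz hcol => by
          rcases hHvz z hz with rfl | rfl
          · exact hα.2.1 ((hadef.trans hcol).symm)
          · exact hα.2.2 ((hbdef.trans hcol).symm))
      rcases hHvz mw hmw1 with rfl | rfl
      · have hca : c = a := (hadef.trans hmw2).symm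
        rw [hca] at hreach; exact Or.inl hreach
      · have hcb : c = b := (hbdef.trans hmw2).symm
        rw [hcb] at hreach; exact Or.inr hreach
    have hSa_cx : ∀ α, α ∈ S → (colGraph H φ a α).Reachable u v → α ∈ CF H φ x := by
      intro α hαS hreach
      rw [hSmem] at hαS
      by_contra hnot
      have hvnbr : ∀ t, (colGraph H φ a α).Adj v t → t = x := by
        rintro t ⟨ht1, ht2⟩
        rcases hHvz t ht1 with rfl | rfl
        · rfl
        · exfalso
          rcases ht2 with h | h
          · exact hab ((hbdef.trans h).symm)
          · exact hαS.2.2 ((hbdef.trans h).symm)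
      have hv1 : ∀ w₁ w₂, (colGraph H φ a α).Adj v w₁ → (colGraph H φ a α).Adj v w₂ →
          w₁ = w₂ := fun w₁ w₂ h1 h2 => (hvnbr w₁ h1).trans (hvnbr w₂ h2).symm
      have hu1 := colGraph_deg1' hprop (c := a) (d := α) (z := u)
        (fun t ht hcol => hαS.1 (mem_CF.mpr ⟨t, ht, hcol⟩))
      have hx1 := colGraph_deg1' hprop (c := a) (d := α) (z := x)
        (fun t ht hcol => hnot (mem_CF.mpr ⟨t, ht, hcol⟩))
      have hvxr : (colGraph H φ a α).Reachable v x :=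
        SimpleGraph.Adj.reachable ⟨hHvx, Or.inl hadef.symm⟩
      exact hux (three_leaves (colGraph_deg2 hprop a α) hv1 hu1 hx1 hvu_ne hvx_ne
        hreach.symm hvxr)
    have hSb_cy : ∀ α, α ∈ S → (colGraph H φ b α).Reachable u v → α ∈ CF H φ y := by
      intro α hαS hreach
      rw [hSmem] at hαS
      by_contra hnot
      have hvnbr : ∀ t, (colGraph H φ b α).Adj v t → t = y := by
        rintro t ⟨ht1, ht2⟩
        rcases hHvz t ht1 with rfl | rfl
        · exfalso
          rcases ht2 with h | h
          · exact hab ((hadef.trans h))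
          · exact hαS.2.1 ((hadef.trans h).symm)
        · rfl
      have hv1 : ∀ w₁ w₂, (colGraph H φ b α).Adj v w₁ → (colGraph H φ b α).Adj v w₂ →
          w₁ = w₂ := fun w₁ w₂ h1 h2 => (hvnbr w₁ h1).trans (hvnbr w₂ h2).symm
      have hu1 := colGraph_deg1' hprop (c := b) (d := α) (z := u)
        (fun t ht hcol => hαS.1 (mem_CF.mpr ⟨t, ht, hcol⟩))
      have hy1 := colGraph_deg1' hprop (c := b) (d := α) (z := y)
        (fun t ht hcol => hnot (mem_CF.mpr ⟨t, ht, hcol⟩))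
      have hvyr : (colGraph H φ b α).Reachable v y :=
        SimpleGraph.Adj.reachable ⟨hHvy, Or.inl hbdef.symm⟩
      exact huy (three_leaves (colGraph_deg2 hprop b α) hv1 hu1 hy1 hvu_ne hvy_ne
        hreach.symm hvyr)
    -- pick β ∈ S outside CF x
    have hexβ : ∃ β, β ∈ S ∧ β ∉ CF H φ x := by
      by_contra hno
      push_neg at hno
      have hsub : insert a S ⊆ CF H φ x := by
        intro t ht
        rcases Finset.mem_insert.mp ht with rfl | htS
        · exact haCFx
        · exact hno t htS
      have hcard := Finset.card_le_card hsub
      rw [Finset.card_insert_of_notMem (fun h => ((hSmem a).mp h).2.1 rfl)] at hcard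
      have := hCFΔ x
      omega
    obtain ⟨β, hβS, hβx⟩ := hexβ
    have hβS' := (hSmem β).mp hβS
    have hβSb : (colGraph H φ b β).Reachable u v :=
      (key β hβS).resolve_left (fun h => hβx (hSa_cx β hβS h))
    have hβy : β ∈ CF H φ y := hSb_cy β hβS hβSb
    -- recolor vx with β
    set φ₅ := Function.update φ s(v, x) β with hφ₅def
    have hφ₅val : ∀ f, f ≠ s(v, x) → φ₅ f = φ f :=
      fun f hf => Function.update_of_ne hf _ _
    have hprop₅ : ProperEC H φ₅ := by
      apply proper_update hprop hHvx
      · intro z hz hzx hcol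
        rcases hHvz z hz with rfl | rfl
        · exact hzx rfl
        · exact hβS'.2.2 (hbdef.trans hcol).symm
      · intro z hz hzv hcol
        exact hβx (mem_CF.mpr ⟨z, hz, hcol⟩)
    have hφ₅ : AcyclicEC H φ₅ := by
      apply acyclic_update hφ hprop₅
      intro c hc m m' h1 h2 h3 h4 h5 h6 W hW1 hW2
      -- the v-side neighbor must be y, so c = b
      have hmy : m = y := by
        rcases hHvz m h1 with rfl | rfl
        · exact absurd rfl h2
        · rfl
      rw [hmy] at h3
      have hcb : c = b := (hbdef.trans h3).symm
      subst hcb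
      -- W yields reachability v-x in colGraph H φ b β
      have hreachvx : (colGraph H φ b β).Reachable v x := walk_to_reach W hW2
      have hvnbr : ∀ t, (colGraph H φ b β).Adj v t → t = y := by
        rintro t ⟨ht1, ht2⟩
        rcases hHvz t ht1 with rfl | rfl
        · exfalso
          rcases ht2 with h | h
          · exact hab (hadef.trans h)
          · exact hβx (mem_CF.mpr ⟨v, hHvx.symm, by rw [Sym2.eq_swap]; exact h⟩)
        · rfl
      have hv1 : ∀ w₁ w₂, (colGraph H φ b β).Adj v w₁ → (colGraph H φ b β).Adj v w₂ →
          w₁ = w₂ := fun w₁ w₂ hh1 hh2 => (hvnbr w₁ hh1).trans (hvnbr w₂ hh2).symm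
      have hu1 := colGraph_deg1' hprop (c := b) (d := β) (z := u)
        (fun t ht hcol => hβS'.1 (mem_CF.mpr ⟨t, ht, hcol⟩))
      have hx1 := colGraph_deg1' hprop (c := b) (d := β) (z := x)
        (fun t ht hcol => hβx (mem_CF.mpr ⟨t, ht, hcol⟩))
      exact hux (three_leaves (colGraph_deg2 hprop b β) hv1 hu1 hx1 hvu_ne hvx_ne
        hβSb.symm hreachvx)
    -- choose the final color α'
    have hexα : ∃ α', α' ∈ S ∧ α' ≠ β ∧ ¬ (colGraph H φ b α').Reachable u v := by
      by_contra hno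
      push_neg at hno
      have hsub : insert b S ⊆ CF H φ y := by
        intro t ht
        rcases Finset.mem_insert.mp ht with rfl | htS
        · exact hbCFy
        · by_cases htβ : t = β
          · subst htβ; exact hβy
          · exact hSb_cy t htS (hno t htS htβ)
      have hcard := Finset.card_le_card hsub
      rw [Finset.card_insert_of_notMem (fun h => ((hSmem b).mp h).2.2 rfl)] at hcard
      have := hCFΔ y
      omega
    obtain ⟨α', hα'S, hα'β, hα'nr⟩ := hexα
    have hα'S' := (hSmem α').mp hα'S
    -- extend to G : contradiction with criticality
    refine hG.1 ⟨Function.update φ₅ s(u, v) α', ?_⟩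
    have hpropG : ProperEC G (Function.update φ₅ s(u, v) α') := by
      apply proper_extend huv hHadj hprop₅
      · intro z hz hcol
        rw [hφ₅val s(u, z) (sym2_ne_of (Or.inl huv.ne) (Or.inl hux))] at hcol
        exact hα'S'.1 (mem_CF.mpr ⟨z, hz, hcol⟩)
      · intro z hz hcol
        rcases hHvz z hz with rfl | rfl
        · rw [hφ₅def, Function.update_self] at hcol
          exact hα'β hcol.symm
        · rw [hφ₅val _ (sym2_ne_of (Or.inr (Ne.symm hxy)) (Or.inl hvx_ne))] at hcol
          exact hα'S'.2.2 ((hbdef.trans hcol).symm)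
    apply acyclic_extend huv hHadj hφ₅ hpropG
    intro c hc m m' h1 h2 h3 h4 W hWcol
    -- u-side : c ∈ CF u
    have hsune : s(u, m) ≠ s(v, x) := sym2_ne_of (Or.inl huv.ne) (Or.inl hux)
    rw [hφ₅val _ hsune] at h2
    have hcCF : c ∈ CF H φ u := mem_CF.mpr ⟨m, h1, h2⟩
    -- v-side : c = b
    have hcb : c = b := by
      rcases hHvz m' h3 with rfl | rfl
      · rw [hφ₅def, Function.update_self] at h4
        exact absurd (h4 ▸ hcCF) hβS'.1
      · rw [hφ₅val _ (sym2_ne_of (Or.inr (Ne.symm hxy)) (Or.inl hvx_ne))] at h4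
        exact (hbdef.trans h4).symm
    subst hcb
    -- W avoids s(v,x) by colors, giving reachability in colGraph H φ b α'
    apply hα'nr
    apply walk_to_reach W
    intro f hf
    have hfvx : f ≠ s(v, x) := by
      intro hcon
      rcases hWcol f hf with h | h
      · rw [hcon, hφ₅def, Function.update_self] at h
        exact hβS'.2.2 h
      · rw [hcon, hφ₅def, Function.update_self] at h
        exact hα'β.symm h
    rw [← hφ₅val f hfvx]
    exact hWcol f hf
  · -- Case 2 : a ∈ CF u, b ∉ CF u
    exact hcase2 x y a b hxy hux huy hvx_ne hvy_ne hHvx hHvy hHvz hadef hbdef hab rfl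
      hSmem hain hbin haCFx hbCFy
  · -- Case 2' : a ∉ CF u, b ∈ CF u
    refine hcase2 y x b a (Ne.symm hxy) huy hux hvy_ne hvx_ne hHvy hHvx
      (fun z hz => (hHvz z hz).symm) hbdef hadef (Ne.symm hab) (Finset.pair_comm a b)
      (fun α => by rw [hSmem α]; tauto) hbin hain hbCFy haCFx
  · -- Case 1 : a, b ∉ CF u
    have hSne : S.Nonempty := by
      rw [← Finset.card_pos]
      omega
    obtain ⟨α, hαS⟩ := hSne
    rw [hSmem] at hαS
    obtain ⟨hα1, hα2, hα3⟩ := hαS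
    obtain ⟨c, hc1, ⟨mz, hmz1, hmz2⟩, ⟨mw, hmw1, hmw2⟩, -⟩ := extract φ hφ α
      (fun z hz hcol => hα1 (mem_CF.mpr ⟨z, hz, hcol⟩))
      (fun z hz hcol => by
        rcases hHvz z hz with rfl | rfl
        · exact hα2 ((hadef.trans hcol).symm)
        · exact hα3 ((hbdef.trans hcol).symm))
    have hcCF : c ∈ CF H φ u := mem_CF.mpr ⟨mz, hmz1, hmz2⟩
    rcases hHvz mw hmw1 with rfl | rfl
    · have hca : c = a := hmw2.symm.trans hadef.symm
      exact hain (hca ▸ hcCF)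
    · have hcb : c = b := hmw2.symm.trans hbdef.symm
      exact hbin (hcb ▸ hcCF)
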